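/- The classic relative entropy sits between partial semantic relative entropies: D_s(p‖q_s) ≤ D(p‖q) ≤ D_s(p_s‖q). -/

import Mathlib

open Finset

/-- Probability of the block of index `i` under the partition induced by `blk`. -/
noncomputable def blockProb {U B : Type*} [Fintype U] [DecidableEq B]
    (p : U → ℝ) (blk : U → B) (i : B) : ℝ :=
  ∑ u : U, if blk u = i then p u else 0

/-- Classic relative entropy (Kullback–Leibler divergence, base 2). -/
noncomputable def relEntropy {U : Type*} [Fintype U] (p q : U → ℝ) : ℝ :=
  ∑ u : U, p u * Real.logb 2 (p u / q u)

/-- Partial semantic relative entropy `D_s(p_s‖q) = ∑_i ∑_{u∈U_i} p(u) log(P_p(U_i)/q(u))`. -/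
noncomputable def semRelEntropyLeft {U B : Type*} [Fintype U] [Fintype B] [DecidableEq B]
    (p q : U → ℝ) (blk : U → B) : ℝ :=
  ∑ u : U, p u * Real.logb 2 (blockProb p blk (blk u) / q u)

/-- Partial semantic relative entropy `D_s(p‖q_s) = ∑_i ∑_{u∈U_i} p(u) log(p(u)/P_q(U_i))`. -/
noncomputable def semRelEntropyRight {U B : Type*} [Fintype U] [Fintype B] [DecidableEq B]
    (p q : U → ℝ) (blk : U → B) : ℝ :=
  ∑ u : U, p u * Real.logb 2 (p u / blockProb q blk (blk u))

/-- The classic relative entropy sits between the partial semantic relative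
entropies: `D_s(p‖q_s) ≤ D(p‖q) ≤ D_s(p_s‖q)`. -/
theorem relEntropy_between_semRelEntropies {U B : Type*} [Fintype U] [Fintype B] [DecidableEq B]
    (p q : U → ℝ) (blk : U → B)
    (hp : ∀ u, 0 ≤ p u) (hpsum : ∑ u, p u = 1)
    (hq : ∀ u, 0 < q u) (hqsum : ∑ u, q u = 1) :
    semRelEntropyRight p q blk ≤ relEntropy p q ∧
      relEntropy p q ≤ semRelEntropyLeft p q blk := by

  have hself : ∀ (f : U → ℝ), (∀ u, 0 ≤ f u) → ∀ u, f u ≤ blockProb f blk (blk u) := by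
    intro f hf u
    unfold blockProb
    have := Finset.single_le_sum (f := fun v => if blk v = blk u then f v else 0)
      (fun v _ => by split <;> simp [hf v]) (Finset.mem_univ u)
    simpa using this
  have hbq : ∀ u, 0 < blockProb q blk (blk u) := fun u =>
    lt_of_lt_of_le (hq u) (hself q (fun v => (hq v).le) u)
  constructor
  · apply Finset.sum_le_sum
    intro u _
    rcases eq_or_lt_of_le (hp u) with h | h
    · simp [← h]
    · apply mul_le_mul_of_nonneg_left _ (hp u)
      have : p u / blockProb q blk (blk u) ≤ p u / q u :=
        div_le_div_of_nonneg_left h.le (hq u) (hself q (fun v => (hq v).le) u)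
      exact Real.logb_le_logb_of_le one_lt_two (div_pos h (hbq u)) this
  · apply Finset.sum_le_sum
    intro u _
    rcases eq_or_lt_of_le (hp u) with h | h
    · simp [← h]
    · apply mul_le_mul_of_nonneg_left _ (hp u)
      exact Real.logb_le_logb_of_le one_lt_two (div_pos h (hq u))
        (div_le_div_of_nonneg_right (hself p hp u) (hq u).le)
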